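/- Let 𝒳, 𝒮, 𝒴, 𝒰, 𝒥 be finite nonempty types with |𝒳| ≥ 2. Let p be a pmf on 𝒳 × 𝒮; for each (x,s) ∈ 𝒳 × 𝒮 let W(·|x,s) be a strictly positive pmf on 𝒴; for each j ∈ 𝒥 let q_j(·|y) be a strictly positive pmf on 𝒰 for every y ∈ 𝒴. For (x,s,j) define the pmf P_{x,s,j}(u) = Σ_{y∈𝒴} W(y|x,s) q_j(u|y) on 𝒰, and define the per-group rate r_j = Σ_{x,s,y,u} p(x,s) W(y|x,s) q_j(u|y) log( q_j(u|y) / P_{x,s,j}(u) ); assume r_j > 0 for every j ∈ 𝒥. For a pmf w on 𝒥 define F(w) = [ min over s ∈ 𝒮 and pairs x₁ ≠ x₂ in 𝒳 of sup_{λ∈[0,1]} Σ_{j∈𝒥} w_j · d_λ(P_{x₁,s,j}, P_{x₂,s,j}) ] / ( Σ_{j∈𝒥} w_j r_j ). Then for every pmf w on 𝒥 there exists a pmf w′ on 𝒥 whose support has at most C(|𝒳|,2)·|𝒮| elements (C(n,2) = n(n−1)/2) and such that F(w′) ≥ F(w). -/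

import Mathlib

open Finset

/-- The Chernoff divergence `d_λ(P,Q) = -log ∑ u, P(u)^(1-λ) * Q(u)^λ`
(real powers). -/
noncomputable def chernoffDiv {U : Type*} [Fintype U] (lam : ℝ) (P Q : U → ℝ) : ℝ :=
  -Real.log (∑ u, P u ^ (1 - lam) * Q u ^ lam)

/-- The objective `F(w)`: the minimum over context letters `s` and pairs
`x₁ ≠ x₂` of the supremum over `λ ∈ [0,1]` of the `w`-weighted Chernoff
divergence, divided by the `w`-weighted per-group rate. -/
noncomputable def ceoObjective {X S U J : Type*} [Fintype X] [Fintype S] [Fintype U] [Fintype J]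
    (P : X → S → J → U → ℝ) (r : J → ℝ) (w : J → ℝ) : ℝ :=
  (⨅ st : {t : S × X × X // t.2.1 ≠ t.2.2},
      ⨆ lam : Set.Icc (0 : ℝ) 1,
        ∑ j, w j * chernoffDiv (lam : ℝ) (P st.1.2.1 st.1.1 j) (P st.1.2.2 st.1.1 j)) /
    ∑ j, w j * r j

section Key

variable {J : Type*} [Fintype J]

private lemma reduce_step (c γ : J → ℝ) (hc : ∀ j, 0 ≤ c j)
    (hsupp : ∀ j, γ j ≠ 0 → c j ≠ 0) (hpos : ∃ j, 0 < γ j) :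
    ∃ θ : ℝ, (∀ j, 0 ≤ c j - θ * γ j) ∧
      (Finset.univ.filter fun j => c j - θ * γ j ≠ 0) ⊂
        (Finset.univ.filter fun j => c j ≠ 0) := by
  classical
  obtain ⟨j₀, hj₀⟩ := hpos
  obtain ⟨jm, hjmmem, hjm⟩ := Finset.exists_min_image
    (Finset.univ.filter fun j => 0 < γ j) (fun j => c j / γ j) ⟨j₀, by simp [hj₀]⟩
  rw [Finset.mem_filter] at hjmmem
  have hγm : 0 < γ jm := hjmmem.2
  refine ⟨c jm / γ jm, ?_, ?_⟩
  · intro j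
    rcases le_or_gt (γ j) 0 with h | h
    · have : c jm / γ jm * γ j ≤ 0 :=
        mul_nonpos_of_nonneg_of_nonpos (div_nonneg (hc jm) hγm.le) h
      linarith [hc j]
    · have h1 := hjm j (by simp [h])
      have h2 : c jm / γ jm * γ j ≤ c j := by
        calc c jm / γ jm * γ j ≤ c j / γ j * γ j :=
              mul_le_mul_of_nonneg_right h1 h.le
          _ = c j := div_mul_cancel₀ _ h.ne'
      linarith
  · have hsub : (Finset.univ.filter fun j => c j - c jm / γ jm * γ j ≠ 0) ⊆
        (Finset.univ.filter fun j => c j ≠ 0) := by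
      intro j hj
      rw [Finset.mem_filter] at hj ⊢
      refine ⟨Finset.mem_univ _, ?_⟩
      intro hcj
      have hγj : γ j = 0 := by
        by_contra h; exact (hsupp j h) hcj
      rw [hcj, hγj] at hj
      simp at hj
    rw [Finset.ssubset_iff_of_subset hsub]
    refine ⟨jm, by simp [hsupp jm hγm.ne'], ?_⟩
    simp [div_mul_cancel₀ _ hγm.ne']

private lemma conic_caratheodory {M : Type*} [AddCommGroup M] [Module ℝ M]
    (v : J → M) :
    ∀ (N : ℕ) (c : J → ℝ), (Finset.univ.filter fun j => c j ≠ 0).card ≤ N → (∀ j, 0 ≤ c j) →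
    ∃ c' : J → ℝ, (∀ j, 0 ≤ c' j) ∧ (∑ j, c' j • v j = ∑ j, c j • v j) ∧
      ((Finset.univ.filter fun j => c' j ≠ 0) ⊆ (Finset.univ.filter fun j => c j ≠ 0)) ∧
      LinearIndependent ℝ (fun j : (Finset.univ.filter fun j => c' j ≠ 0) => v (j : J)) := by
  classical
  intro N
  induction N with
  | zero =>
    intro c hcard hc
    refine ⟨c, hc, rfl, subset_rfl, ?_⟩
    have hempty : (Finset.univ.filter fun j => c j ≠ 0) = ∅ :=
      Finset.card_eq_zero.mp (Nat.le_zero.mp hcard)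
    haveI : IsEmpty ((Finset.univ.filter fun j => c j ≠ 0) : Finset J) :=
      ⟨fun j => Finset.eq_empty_iff_forall_notMem.mp hempty j.1 j.2⟩
    exact linearIndependent_empty_type
  | succ N ih =>
    intro c hcard hc
    by_cases hind : LinearIndependent ℝ
        (fun j : (Finset.univ.filter fun j => c j ≠ 0) => v (j : J))
    · exact ⟨c, hc, rfl, subset_rfl, hind⟩
    obtain ⟨g, hg0, i, hgi⟩ := Fintype.not_linearIndependent_iff.mp hind
    classical
    set γ : J → ℝ :=
      fun j => if h : j ∈ (Finset.univ.filter fun j => c j ≠ 0) then g ⟨j, h⟩ else 0 with hγ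
    have hγi : ∀ i : (Finset.univ.filter fun j => c j ≠ 0), γ (i : J) = g i := by
      intro i
      simp only [hγ]
      rw [dif_pos i.2]
    have hγE : ∀ j, γ j ≠ 0 → c j ≠ 0 := by
      intro j hj
      by_contra hcj
      have hmem : j ∉ (Finset.univ.filter fun j => c j ≠ 0) := by simp [hcj]
      have : γ j = 0 := by simp only [hγ]; rw [dif_neg hmem]
      exact hj this
    have hγsum : ∑ j, γ j • v j = 0 := by
      calc ∑ j, γ j • v j = ∑ j ∈ (Finset.univ.filter fun j => c j ≠ 0), γ j • v j :=
            (Finset.sum_subset (Finset.subset_univ _) (fun x _ hx => by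
              have : γ x = 0 := by simp only [hγ]; rw [dif_neg hx]
              rw [this, zero_smul])).symm
        _ = ∑ i : (Finset.univ.filter fun j => c j ≠ 0), γ (i : J) • v (i : J) :=
            (Finset.sum_coe_sort _ _).symm
        _ = ∑ i : (Finset.univ.filter fun j => c j ≠ 0), g i • v (i : J) :=
            Finset.sum_congr rfl fun i _ => by rw [hγi]
        _ = 0 := hg0
    obtain ⟨δ, hδpos, hδsum, hδsupp⟩ :
        ∃ δ : J → ℝ, (∃ j, 0 < δ j) ∧ (∑ j, δ j • v j = 0) ∧ (∀ j, δ j ≠ 0 → c j ≠ 0) := by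
      rcases hgi.lt_or_gt with h | h
      · refine ⟨fun j => -γ j, ⟨i, by show 0 < -γ (i : J); rw [hγi i]; linarith⟩, ?_, ?_⟩
        · simp [neg_smul, hγsum]
        · intro j hj; exact hγE j (by simpa using hj)
      · exact ⟨γ, ⟨i, by show 0 < γ (i : J); rw [hγi i]; exact h⟩, hγsum, hγE⟩
    obtain ⟨θ, hθ0, hθss⟩ := reduce_step c δ hc hδsupp hδpos
    have hsum2 : ∑ j, (c j - θ * δ j) • v j = ∑ j, c j • v j := by
      simp only [sub_smul, mul_smul, Finset.sum_sub_distrib, ← Finset.smul_sum, hδsum,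
        smul_zero, sub_zero]
    have hcard2 : (Finset.univ.filter fun j => c j - θ * δ j ≠ 0).card ≤ N := by
      have := Finset.card_lt_card hθss
      omega
    obtain ⟨c', h1, h2, h3, h4⟩ := ih (fun j => c j - θ * δ j) hcard2 hθ0
    exact ⟨c', h1, by rw [h2, hsum2], h3.trans hθss.subset, h4⟩

private lemma key_lemma {R : Type*} [Fintype R] [Nonempty R] (A : R → J → ℝ) :
    ∀ (N : ℕ) (β : J → ℝ), (Finset.univ.filter fun j => β j ≠ 0).card ≤ N →
    (∀ j, 0 ≤ β j) → (∃ j, β j ≠ 0) → (∀ ρ, 0 ≤ ∑ j, β j * A ρ j) →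
    ∃ β' : J → ℝ, (∀ j, 0 ≤ β' j) ∧ (∃ j, β' j ≠ 0) ∧ (∀ ρ, 0 ≤ ∑ j, β' j * A ρ j) ∧
      (Finset.univ.filter fun j => β' j ≠ 0).card ≤ Fintype.card R := by
  classical
  set v : J → (R → ℝ) := fun j ρ => A ρ j with hv
  have hsum_apply : ∀ (c : J → ℝ) (ρ : R), (∑ j, c j • v j) ρ = ∑ j, c j * A ρ j := by
    intro c ρ
    rw [Finset.sum_apply]
    exact Finset.sum_congr rfl fun j _ => rfl
  have hfinrank : Module.finrank ℝ (R → ℝ) = Fintype.card R :=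
    Module.finrank_fintype_fun_eq_card ℝ
  -- generic: from conic Carathéodory output, bound the card
  have hCC : ∀ (c : J → ℝ), (∀ j, 0 ≤ c j) →
      ∃ c' : J → ℝ, (∀ j, 0 ≤ c' j) ∧ (∑ j, c' j • v j = ∑ j, c j • v j) ∧
        (Finset.univ.filter fun j => c' j ≠ 0).card ≤ Fintype.card R := by
    intro c hc
    obtain ⟨c', h1, h2, _, h4⟩ := conic_caratheodory v
      ((Finset.univ.filter fun j => c j ≠ 0).card) c le_rfl hc
    refine ⟨c', h1, h2, ?_⟩
    have := h4.fintype_card_le_finrank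
    rwa [Fintype.card_coe, hfinrank] at this
  intro N
  induction N with
  | zero =>
    intro β hcard hβ0 hβne hA
    obtain ⟨j, hj⟩ := hβne
    have hmem : j ∈ Finset.univ.filter (fun j => β j ≠ 0) := by simp [hj]
    have := Finset.card_pos.mpr ⟨j, hmem⟩
    omega
  | succ N ih =>
    intro β hcard hβ0 hβne hA
    by_cases hsmall : (Finset.univ.filter fun j => β j ≠ 0).card ≤ Fintype.card R
    · exact ⟨β, hβ0, hβne, hA, hsmall⟩
    push_neg at hsmall
    by_cases hy0 : (fun ρ => ∑ j, β j * A ρ j) = 0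
    · -- the combined vector is zero
      have hβv : ∑ j, β j • v j = 0 := by
        funext ρ
        rw [hsum_apply]
        simpa using congrFun hy0 ρ
      set E := (Finset.univ.filter fun j => β j ≠ 0) with hE
      set V := Submodule.span ℝ (Set.range fun j : E => v (j : J)) with hV
      have hmemV : ∀ j ∈ E, v j ∈ V := fun j hj =>
        Submodule.subset_span ⟨⟨j, hj⟩, rfl⟩
      by_cases hz : ∃ z : R → ℝ, z ∈ V ∧ (∀ ρ, 0 ≤ z ρ) ∧ z ≠ 0
      · -- a nonzero nonnegative vector in the span: shift and apply Carathéodory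
        obtain ⟨z, hzV, hz0, hzne⟩ := hz
        rw [hV] at hzV
        obtain ⟨d, hd⟩ := (Submodule.mem_span_range_iff_exists_fun ℝ).mp hzV
        set d' : J → ℝ := fun j => if h : j ∈ E then d ⟨j, h⟩ else 0 with hd'
        have hd'sum : ∑ j, d' j • v j = z := by
          calc ∑ j, d' j • v j = ∑ j ∈ E, d' j • v j :=
                (Finset.sum_subset (Finset.subset_univ _) (fun x _ hx => by
                  have : d' x = 0 := by simp only [hd']; rw [dif_neg hx]
                  rw [this, zero_smul])).symm
            _ = ∑ i : E, d' (i : J) • v (i : J) := (Finset.sum_coe_sort _ _).symm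
            _ = ∑ i : E, d i • v (i : J) := Finset.sum_congr rfl fun i _ => by
                have : d' (i : J) = d i := by simp only [hd']; rw [dif_pos i.2]
                rw [this]
            _ = z := hd
        have hEne : E.Nonempty := by
          obtain ⟨j, hj⟩ := hβne
          exact ⟨j, by simp [hE, hj]⟩
        obtain ⟨jM, hjMmem, hjM⟩ := Finset.exists_max_image E (fun j => -d' j / β j) hEne
        set M : ℝ := max (-d' jM / β jM) 0 with hM
        set D : J → ℝ := fun j => d' j + M * β j with hD
        have hβposE : ∀ j ∈ E, 0 < β j := by
          intro j hj
          rw [hE, Finset.mem_filter] at hj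
          exact (hβ0 j).lt_of_ne (Ne.symm hj.2)
        have hD0 : ∀ j, 0 ≤ D j := by
          intro j
          by_cases hj : j ∈ E
          · have hβj := hβposE j hj
            have h1 : -d' j / β j ≤ M := le_trans (hjM j hj) (le_max_left _ _)
            have := (div_le_iff₀ hβj).mp h1
            simp only [hD]
            linarith
          · have h1 : d' j = 0 := by simp only [hd']; rw [dif_neg hj]
            have h2 : β j = 0 := by
              by_contra h
              exact hj (by simp [hE, h])
            simp [hD, h1, h2]
        have hDsum : ∑ j, D j • v j = z := by
          simp only [hD, add_smul, mul_smul, Finset.sum_add_distrib, ← Finset.smul_sum,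
            hβv, smul_zero, add_zero, hd'sum]
        obtain ⟨c', h1, h2, h3⟩ := hCC D hD0
        rw [hDsum] at h2
        refine ⟨c', h1, ?_, ?_, h3⟩
        · by_contra h
          push_neg at h
          have : ∑ j, c' j • v j = 0 := by
            rw [Finset.sum_congr rfl fun j _ => by rw [h j, zero_smul]]
            simp
          exact hzne (by rw [← h2, this])
        · intro ρ
          have := congrFun h2 ρ
          rw [hsum_apply] at this
          rw [this]
          exact hz0 ρ
      · -- no nonzero nonnegative vector in the span: V is a proper subspace
        have hVne : V ≠ ⊤ := by
          intro htop
          exact hz ⟨fun _ => 1, by rw [htop]; trivial, fun ρ => zero_le_one, by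
            intro h
            have := congrFun h (Classical.arbitrary R)
            simpa using this⟩
        obtain ⟨j₀, hj₀⟩ := hβne
        have hj₀E : j₀ ∈ E := by simp [hE, hj₀]
        by_cases hind : LinearIndependent ℝ (fun j : (E.erase j₀) => v (j : J))
        · -- contradiction with the cardinality assumption
          exfalso
          set fam : (E.erase j₀) → V := fun j => ⟨v (j : J), hmemV _ (Finset.mem_of_mem_erase j.2)⟩
            with hfam
          have hindV : LinearIndependent ℝ fam := by
            apply LinearIndependent.of_comp V.subtype
            exact hind
          have h1 : (E.erase j₀).card ≤ Module.finrank ℝ V := by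
            have := hindV.fintype_card_le_finrank
            rwa [Fintype.card_coe] at this
          have h2 : Module.finrank ℝ V < Fintype.card R := by
            have := Submodule.finrank_lt (K := ℝ) (V := R → ℝ) hVne
            rwa [hfinrank] at this
          have h3 := Finset.card_erase_of_mem hj₀E
          have h4 : 0 < E.card := Finset.card_pos.mpr ⟨j₀, hj₀E⟩
          omega
        · -- dependence avoiding j₀: reduce the support
          obtain ⟨g, hg0, i, hgi⟩ := Fintype.not_linearIndependent_iff.mp hind
          set γ : J → ℝ := fun j => if h : j ∈ E.erase j₀ then g ⟨j, h⟩ else 0 with hγ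
          have hγi : ∀ i : (E.erase j₀), γ (i : J) = g i := by
            intro i
            simp only [hγ]
            rw [dif_pos i.2]
          have hγj₀ : γ j₀ = 0 := by
            simp only [hγ]
            rw [dif_neg (Finset.notMem_erase j₀ E)]
          have hγE : ∀ j, γ j ≠ 0 → β j ≠ 0 := by
            intro j hj
            by_contra hβj
            have hmem : j ∉ E.erase j₀ := fun hmem => by
              have := Finset.mem_of_mem_erase hmem
              rw [hE, Finset.mem_filter] at this
              exact this.2 hβj
            have : γ j = 0 := by simp only [hγ]; rw [dif_neg hmem]
            exact hj this
          have hγsum : ∑ j, γ j • v j = 0 := by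
            calc ∑ j, γ j • v j = ∑ j ∈ E.erase j₀, γ j • v j :=
                  (Finset.sum_subset (Finset.subset_univ _) (fun x _ hx => by
                    have : γ x = 0 := by simp only [hγ]; rw [dif_neg hx]
                    rw [this, zero_smul])).symm
              _ = ∑ i : (E.erase j₀), γ (i : J) • v (i : J) := (Finset.sum_coe_sort _ _).symm
              _ = ∑ i : (E.erase j₀), g i • v (i : J) :=
                  Finset.sum_congr rfl fun i _ => by rw [hγi]
              _ = 0 := hg0
          obtain ⟨δ, hδpos, hδsum, hδj₀, hδsupp⟩ :
              ∃ δ : J → ℝ, (∃ j, 0 < δ j) ∧ (∑ j, δ j • v j = 0) ∧ δ j₀ = 0 ∧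
                (∀ j, δ j ≠ 0 → β j ≠ 0) := by
            rcases hgi.lt_or_gt with h | h
            · refine ⟨fun j => -γ j, ⟨i, by show 0 < -γ (i : J); rw [hγi i]; linarith⟩, ?_, ?_, ?_⟩
              · simp [neg_smul, hγsum]
              · simp [hγj₀]
              · intro j hj; exact hγE j (by simpa using hj)
            · exact ⟨γ, ⟨i, by show 0 < γ (i : J); rw [hγi i]; exact h⟩, hγsum, hγj₀, hγE⟩
          obtain ⟨θ, hθ0, hθss⟩ := reduce_step β δ hβ0 hδsupp hδpos
          have hsum2 : ∑ j, (β j - θ * δ j) • v j = 0 := by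
            simp only [sub_smul, mul_smul, Finset.sum_sub_distrib, ← Finset.smul_sum, hδsum,
              smul_zero, sub_zero, hβv]
          have hcard2 : (Finset.univ.filter fun j => β j - θ * δ j ≠ 0).card ≤ N := by
            have := Finset.card_lt_card hθss
            rw [← hE] at this
            omega
          refine ih (fun j => β j - θ * δ j) hcard2 hθ0 ⟨j₀, ?_⟩ ?_
          · show β j₀ - θ * δ j₀ ≠ 0
            rw [hδj₀]
            simpa using hj₀
          · intro ρ
            have := congrFun hsum2 ρ
            rw [hsum_apply] at this
            rw [this]
            simp
        -- end cases
    · -- nonzero value vector: apply Carathéodory directly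
      obtain ⟨c', h1, h2, h3⟩ := hCC β hβ0
      refine ⟨c', h1, ?_, ?_, h3⟩
      · by_contra h
        push_neg at h
        apply hy0
        funext ρ
        have := congrFun h2 ρ
        rw [hsum_apply, hsum_apply] at this
        have hzero : ∑ j, c' j * A ρ j = 0 := by
          rw [Finset.sum_congr rfl fun j _ => by rw [h j, zero_mul]]
          simp
        rw [← this, hzero]
        simp
      · intro ρ
        have := congrFun h2 ρ
        rw [hsum_apply, hsum_apply] at this
        rw [this]
        exact hA ρ

end Key

section Analysis

private lemma chernoff_symm {U : Type*} [Fintype U] (lam : ℝ) (P Q : U → ℝ) :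
    chernoffDiv (1 - lam) P Q = chernoffDiv lam Q P := by
  have h : (∑ u, P u ^ (1 - (1 - lam)) * Q u ^ (1 - lam)) = ∑ u, Q u ^ (1 - lam) * P u ^ lam :=
    Finset.sum_congr rfl fun u _ => by rw [show (1:ℝ) - (1 - lam) = lam by ring, mul_comm]
  unfold chernoffDiv
  rw [h]

private lemma chernoff_cont {U : Type*} [Fintype U] [Nonempty U] (P Q : U → ℝ)
    (hP : ∀ u, 0 < P u) (hQ : ∀ u, 0 < Q u) :
    Continuous fun lam : ℝ => chernoffDiv lam P Q := by
  unfold chernoffDiv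
  have hsum : Continuous fun lam : ℝ => ∑ u, P u ^ (1 - lam) * Q u ^ lam := by
    apply continuous_finset_sum
    intro u _
    have h1 : Continuous fun lam : ℝ => Real.exp (Real.log (P u) * (1 - lam)) :=
      Real.continuous_exp.comp (continuous_const.mul (continuous_const.sub continuous_id))
    have h2 : Continuous fun lam : ℝ => Real.exp (Real.log (Q u) * lam) :=
      Real.continuous_exp.comp (continuous_const.mul continuous_id)
    refine (h1.mul h2).congr fun lam => ?_
    rw [Real.rpow_def_of_pos (hP u), Real.rpow_def_of_pos (hQ u)]; rfl
  refine (hsum.log ?_).neg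
  intro lam
  have : 0 < ∑ u, P u ^ (1 - lam) * Q u ^ lam :=
    Finset.sum_pos (fun u _ => mul_pos (Real.rpow_pos_of_pos (hP u) _)
      (Real.rpow_pos_of_pos (hQ u) _)) Finset.univ_nonempty
  exact this.ne'

end Analysis

/-- group-cardinality reduction for the CEO objective: any mixing
pmf `w` on groups can be replaced by a pmf `w'` supported on at most
`C(|X|,2)·|S|` groups without decreasing the objective. -/
theorem stmt2 {X S Y U J : Type*} [Fintype X] [Fintype S] [Fintype Y] [Fintype U] [Fintype J]
    [Nonempty X] [Nonempty S] [Nonempty Y] [Nonempty U] [Nonempty J]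
    (hX : 2 ≤ Fintype.card X)
    (p : X × S → ℝ) (hp0 : ∀ z, 0 ≤ p z) (hp1 : ∑ z, p z = 1)
    (W : X → S → Y → ℝ) (hW0 : ∀ x s y, 0 < W x s y) (hW1 : ∀ x s, ∑ y, W x s y = 1)
    (q : J → Y → U → ℝ) (hq0 : ∀ j y u, 0 < q j y u) (hq1 : ∀ j y, ∑ u, q j y u = 1)
    (P : X → S → J → U → ℝ)
    (hP : ∀ x s j u, P x s j u = ∑ y, W x s y * q j y u)
    (r : J → ℝ)
    (hr : ∀ j, r j = ∑ x, ∑ s, ∑ y, ∑ u,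
        p (x, s) * W x s y * q j y u * Real.log (q j y u / P x s j u))
    (hrpos : ∀ j, 0 < r j)
    (w : J → ℝ) (hw0 : ∀ j, 0 ≤ w j) (hw1 : ∑ j, w j = 1) :
    ∃ w' : J → ℝ, (∀ j, 0 ≤ w' j) ∧ (∑ j, w' j = 1) ∧
      (Finset.univ.filter fun j => w' j ≠ 0).card ≤
        Nat.choose (Fintype.card X) 2 * Fintype.card S ∧
      ceoObjective P r w ≤ ceoObjective P r w' := by
  classical
  have hPpos : ∀ x s j u, 0 < P x s j u := by
    intro x s j u
    rw [hP]
    exact Finset.sum_pos (fun y _ => mul_pos (hW0 x s y) (hq0 j y u)) Finset.univ_nonempty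
  obtain ⟨x₁, x₂, hx12⟩ := Fintype.exists_pair_of_one_lt_card (by omega : 1 < Fintype.card X)
  haveI hTne : Nonempty {t : S × X × X // t.2.1 ≠ t.2.2} :=
    ⟨⟨(Classical.arbitrary S, x₁, x₂), hx12⟩⟩
  haveI hIccne : Nonempty (Set.Icc (0:ℝ) 1) := ⟨⟨0, by norm_num⟩⟩
  set G : (J → ℝ) → {t : S × X × X // t.2.1 ≠ t.2.2} → ℝ → ℝ :=
    fun u0 t lam => ∑ j, u0 j * chernoffDiv lam (P t.1.2.1 t.1.1 j) (P t.1.2.2 t.1.1 j) with hG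
  have hGcont : ∀ u0 t, Continuous (G u0 t) := by
    intro u0 t
    apply continuous_finset_sum
    intro j _
    exact continuous_const.mul (chernoff_cont _ _ (hPpos _ _ _ ) (hPpos _ _ _))
  have hGbdd : ∀ u0 t, BddAbove (Set.range fun lam : Set.Icc (0:ℝ) 1 => G u0 t (lam : ℝ)) := by
    intro u0 t
    refine BddAbove.mono ?_ (IsCompact.bddAbove_image
      (isCompact_Icc : IsCompact (Set.Icc (0:ℝ) 1)) (hGcont u0 t).continuousOn)
    rintro _ ⟨lam, rfl⟩
    exact ⟨(lam : ℝ), lam.2, rfl⟩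
  have hwne : ∃ j, w j ≠ 0 := by
    by_contra h
    push_neg at h
    rw [Finset.sum_congr rfl fun j _ => h j] at hw1
    simp at hw1
  have hden : ∀ u0 : J → ℝ, (∀ j, 0 ≤ u0 j) → (∃ j, u0 j ≠ 0) → 0 < ∑ j, u0 j * r j := by
    intro u0 h0 hne
    obtain ⟨j0, hj0⟩ := hne
    exact Finset.sum_pos' (fun j _ => mul_nonneg (h0 j) (hrpos j).le)
      ⟨j0, Finset.mem_univ _, mul_pos ((h0 j0).lt_of_ne (Ne.symm hj0)) (hrpos j0)⟩
  have hdenW : 0 < ∑ j, w j * r j := hden w hw0 hwne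
  set c := ceoObjective P r w with hcdef
  have hnum : c * (∑ j, w j * r j) =
      ⨅ t : {t : S × X × X // t.2.1 ≠ t.2.2}, ⨆ lam : Set.Icc (0:ℝ) 1, G w t (lam : ℝ) := by
    have h1 : c = (⨅ t : {t : S × X × X // t.2.1 ≠ t.2.2},
        ⨆ lam : Set.Icc (0:ℝ) 1, G w t (lam : ℝ)) / ∑ j, w j * r j := rfl
    rw [h1, div_mul_cancel₀ _ hdenW.ne']
  -- rows
  haveI : Nonempty (S × {e : Finset X // e.card = 2}) :=
    ⟨(Classical.arbitrary S, ⟨{x₁, x₂}, Finset.card_pair hx12⟩)⟩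
  have hrep : ∀ ρ : S × {e : Finset X // e.card = 2},
      ∃ a b : X, a ≠ b ∧ (ρ.2 : Finset X) = {a, b} := fun ρ => Finset.card_eq_two.mp ρ.2.2
  choose X1 X2 hX12 hXE using hrep
  set tOf : (S × {e : Finset X // e.card = 2}) → {t : S × X × X // t.2.1 ≠ t.2.2} :=
    fun ρ => ⟨(ρ.1, X1 ρ, X2 ρ), hX12 ρ⟩ with htOf
  have hlam : ∀ ρ : S × {e : Finset X // e.card = 2}, ∃ lam : ℝ, lam ∈ Set.Icc (0:ℝ) 1 ∧
      c * (∑ j, w j * r j) ≤ G w (tOf ρ) lam := by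
    intro ρ
    obtain ⟨l, hl, hmax⟩ := isCompact_Icc.exists_isMaxOn (Set.nonempty_Icc.mpr zero_le_one)
      (hGcont w (tOf ρ)).continuousOn
    refine ⟨l, hl, ?_⟩
    rw [hnum]
    refine le_trans (ciInf_le (Set.Finite.bddBelow (Set.finite_range _)) (tOf ρ)) ?_
    exact ciSup_le fun x => hmax x.2
  choose lam hlamIcc hlamge using hlam
  set Amat : (S × {e : Finset X // e.card = 2}) → J → ℝ := fun ρ j =>
    chernoffDiv (lam ρ) (P (X1 ρ) ρ.1 j) (P (X2 ρ) ρ.1 j) - c * r j with hAmat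
  have hrowsum : ∀ (u0 : J → ℝ) ρ, ∑ j, u0 j * Amat ρ j
      = G u0 (tOf ρ) (lam ρ) - c * ∑ j, u0 j * r j := by
    intro u0 ρ
    have hGval : G u0 (tOf ρ) (lam ρ)
        = ∑ j, u0 j * chernoffDiv (lam ρ) (P (X1 ρ) ρ.1 j) (P (X2 ρ) ρ.1 j) := rfl
    rw [hGval, Finset.mul_sum, ← Finset.sum_sub_distrib]
    exact Finset.sum_congr rfl fun j _ => by simp only [hAmat]; ring
  have hArow : ∀ ρ, 0 ≤ ∑ j, w j * Amat ρ j := by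
    intro ρ
    rw [hrowsum]
    have := hlamge ρ
    linarith
  obtain ⟨β, hβ0, hβne, hβA, hβcard⟩ := key_lemma Amat
    ((Finset.univ.filter fun j => w j ≠ 0).card) w le_rfl hw0 hwne hArow
  set Sβ := ∑ j, β j with hSβ
  have hSβpos : 0 < Sβ := by
    obtain ⟨j0, hj0⟩ := hβne
    exact Finset.sum_pos' (fun j _ => hβ0 j)
      ⟨j0, Finset.mem_univ _, (hβ0 j0).lt_of_ne (Ne.symm hj0)⟩
  have hw'0 : ∀ j, 0 ≤ β j / Sβ := fun j => div_nonneg (hβ0 j) hSβpos.le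
  have hw'ne : ∃ j, β j / Sβ ≠ 0 := by
    obtain ⟨j0, hj0⟩ := hβne
    exact ⟨j0, div_ne_zero hj0 hSβpos.ne'⟩
  have hden' : 0 < ∑ j, (β j / Sβ) * r j := hden _ hw'0 hw'ne
  refine ⟨fun j => β j / Sβ, hw'0, ?_, ?_, ?_⟩
  · rw [← Finset.sum_div]
    exact div_self hSβpos.ne'
  · have hfilter : (Finset.univ.filter fun j => β j / Sβ ≠ 0)
        = (Finset.univ.filter fun j => β j ≠ 0) := by
      refine Finset.filter_congr fun j _ => ?_
      simp [div_eq_zero_iff, hSβpos.ne']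
    rw [hfilter]
    refine le_trans hβcard (le_of_eq ?_)
    rw [Fintype.card_prod, Fintype.card_finset_len, Nat.mul_comm]
  · -- the objective does not decrease
    have hrow' : ∀ ρ, c * (∑ j, (β j / Sβ) * r j)
        ≤ G (fun j => β j / Sβ) (tOf ρ) (lam ρ) := by
      intro ρ
      have h := hβA ρ
      rw [hrowsum β ρ] at h
      have hG' : G (fun j => β j / Sβ) (tOf ρ) (lam ρ) = G β (tOf ρ) (lam ρ) / Sβ := by
        have h1 : G (fun j => β j / Sβ) (tOf ρ) (lam ρ) = ∑ j, (β j / Sβ)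
            * chernoffDiv (lam ρ) (P (X1 ρ) ρ.1 j) (P (X2 ρ) ρ.1 j) := rfl
        have h2 : G β (tOf ρ) (lam ρ) = ∑ j, β j
            * chernoffDiv (lam ρ) (P (X1 ρ) ρ.1 j) (P (X2 ρ) ρ.1 j) := rfl
        rw [h1, h2, Finset.sum_div]
        exact Finset.sum_congr rfl fun j _ => div_mul_eq_mul_div _ _ _
      have hr' : ∑ j, (β j / Sβ) * r j = (∑ j, β j * r j) / Sβ := by
        rw [Finset.sum_div]
        exact Finset.sum_congr rfl fun j _ => div_mul_eq_mul_div _ _ _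
      rw [hG', hr', ← mul_div_assoc]
      gcongr
      linarith
    have hkey : ∀ t : {t : S × X × X // t.2.1 ≠ t.2.2},
        c * (∑ j, (β j / Sβ) * r j)
          ≤ ⨆ lam : Set.Icc (0:ℝ) 1, G (fun j => β j / Sβ) t (lam : ℝ) := by
      rintro ⟨⟨s, a, b⟩, hab⟩
      set ρ : S × {e : Finset X // e.card = 2} :=
        (s, ⟨{a, b}, Finset.card_pair hab⟩) with hρ
      have hpair : ({a, b} : Finset X) = {X1 ρ, X2 ρ} := hXE ρ
      have ha : a ∈ ({X1 ρ, X2 ρ} : Finset X) := by rw [← hpair]; simp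
      have hb : b ∈ ({X1 ρ, X2 ρ} : Finset X) := by rw [← hpair]; simp
      rw [Finset.mem_insert, Finset.mem_singleton] at ha hb
      have hval : c * (∑ j, (β j / Sβ) * r j)
          ≤ ∑ j, (β j / Sβ) * chernoffDiv (lam ρ) (P (X1 ρ) s j) (P (X2 ρ) s j) := hrow' ρ
      have horient : (X1 ρ = a ∧ X2 ρ = b) ∨ (X1 ρ = b ∧ X2 ρ = a) := by
        rcases ha with h1 | h1 <;> rcases hb with h2 | h2
        · exact absurd (h1.trans h2.symm) hab
        · exact Or.inl ⟨h1.symm, h2.symm⟩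
        · exact Or.inr ⟨h2.symm, h1.symm⟩
        · exact absurd (h1.trans h2.symm) hab
      rcases horient with ⟨h1, h2⟩ | ⟨h1, h2⟩
      · rw [h1, h2] at hval
        refine le_trans hval ?_
        have hGval : (∑ j, (β j / Sβ) * chernoffDiv (lam ρ) (P a s j) (P b s j))
            = G (fun j => β j / Sβ) ⟨(s, a, b), hab⟩ (lam ρ) := rfl
        rw [hGval]
        exact le_ciSup (hGbdd _ _) ⟨lam ρ, hlamIcc ρ⟩
      · rw [h1, h2] at hval
        have hsum : (∑ j, (β j / Sβ) * chernoffDiv (lam ρ) (P b s j) (P a s j))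
            = ∑ j, (β j / Sβ) * chernoffDiv (1 - lam ρ) (P a s j) (P b s j) :=
          Finset.sum_congr rfl fun j _ => by rw [chernoff_symm]
        rw [hsum] at hval
        refine le_trans hval ?_
        have hGval : (∑ j, (β j / Sβ) * chernoffDiv (1 - lam ρ) (P a s j) (P b s j))
            = G (fun j => β j / Sβ) ⟨(s, a, b), hab⟩ (1 - lam ρ) := rfl
        rw [hGval]
        have hmem : (1 - lam ρ) ∈ Set.Icc (0:ℝ) 1 := by
          obtain ⟨hl0, hl1⟩ := hlamIcc ρ
          constructor
          · linarith
          · linarith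
        exact le_ciSup (hGbdd _ _) ⟨_, hmem⟩
    have hnum' : c * (∑ j, (β j / Sβ) * r j)
        ≤ ⨅ t : {t : S × X × X // t.2.1 ≠ t.2.2},
            ⨆ lam : Set.Icc (0:ℝ) 1, G (fun j => β j / Sβ) t (lam : ℝ) :=
      le_ciInf hkey
    have hobj : ceoObjective P r (fun j => β j / Sβ)
        = (⨅ t : {t : S × X × X // t.2.1 ≠ t.2.2},
            ⨆ lam : Set.Icc (0:ℝ) 1, G (fun j => β j / Sβ) t (lam : ℝ))
          / (∑ j, (β j / Sβ) * r j) := rfl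
    show c ≤ ceoObjective P r (fun j => β j / Sβ)
    rw [hobj, le_div_iff₀ hden']
    exact hnum'
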